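/- For k < 0 and x, y in the open ball ‖x‖₂², ‖y‖₂² < −1/k, the Möbius sum x ⊕ y also lies in the open ball: ‖x ⊕ y‖₂² < −1/k. -/

import Mathlib

open scoped InnerProductSpace

/-- Möbius addition in the Poincaré ball of curvature `k`. -/
noncomputable def mobiusAdd {d : ℕ} (k : ℝ) (x y : EuclideanSpace ℝ (Fin d)) :
    EuclideanSpace ℝ (Fin d) :=
  (1 / (1 - 2 * k * ⟪x, y⟫_ℝ + k ^ 2 * ‖x‖ ^ 2 * ‖y‖ ^ 2)) •
    ((1 - 2 * k * ⟪x, y⟫_ℝ - k * ‖y‖ ^ 2) • x + (1 + k * ‖x‖ ^ 2) • y)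

lemma norm_combo_sq {d : ℕ} (a b : ℝ) (x y : EuclideanSpace ℝ (Fin d)) :
    ‖a • x + b • y‖ ^ 2 =
      a ^ 2 * ‖x‖ ^ 2 + 2 * (a * b) * ⟪x, y⟫_ℝ + b ^ 2 * ‖y‖ ^ 2 := by
  have h1 : ‖a • x + b • y‖ ^ 2 = ⟪a • x + b • y, a • x + b • y⟫_ℝ := by
    rw [real_inner_self_eq_norm_sq]
  rw [h1]
  simp only [inner_add_left, inner_add_right, real_inner_smul_left, real_inner_smul_right,
    real_inner_self_eq_norm_sq, norm_smul, mul_pow, sq_abs, Real.norm_eq_abs]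
  rw [real_inner_comm y x]
  ring

theorem mobius_add_mem_ball (d : ℕ) (k : ℝ) (hk : k < 0)
    (x y : EuclideanSpace ℝ (Fin d))
    (hx : ‖x‖ ^ 2 < -(1 / k)) (hy : ‖y‖ ^ 2 < -(1 / k)) :
    ‖mobiusAdd k x y‖ ^ 2 < -(1 / k) := by
  set X := ‖x‖ ^ 2 with hX
  set Y := ‖y‖ ^ 2 with hY
  set P := ⟪x, y⟫_ℝ with hP
  set t := ‖x‖ * ‖y‖ with ht
  have hXnn : 0 ≤ X := by positivity
  have hYnn : 0 ≤ Y := by positivity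
  have htnn : 0 ≤ t := by positivity
  have hk1 : k * (-(1 / k)) = -1 := by
    field_simp
    rw [div_self hk.ne]
  have hkX : k * X > -1 := by nlinarith [mul_lt_mul_of_neg_left hx hk]
  have hkY : k * Y > -1 := by nlinarith [mul_lt_mul_of_neg_left hy hk]
  have hkXnp : k * X ≤ 0 := mul_nonpos_of_nonpos_of_nonneg hk.le hXnn
  have hkYnp : k * Y ≤ 0 := mul_nonpos_of_nonpos_of_nonneg hk.le hYnn
  have hPle : P ≤ t := real_inner_le_norm x y
  have hPge : -t ≤ P := neg_le_of_neg_le (by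
      have h := real_inner_le_norm x (-y)
      simpa [hP, ht, inner_neg_right] using h)
  have ht2 : (k * t) ^ 2 = (k * X) * (k * Y) := by rw [ht, hX, hY]; ring
  have hkxy : 1 + k * t > 0 := by
    nlinarith [sq_nonneg (1 + k * t),
      mul_nonneg (by linarith : (0:ℝ) ≤ -(k * X)) (by linarith : (0:ℝ) ≤ 1 + k * Y)]
  have hD : 0 < 1 - 2 * k * P + k ^ 2 * X * Y := by
    nlinarith [mul_pos hkxy hkxy,
      mul_nonneg (by linarith : (0:ℝ) ≤ -k) (by linarith : (0:ℝ) ≤ P + t)]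
  set D := 1 - 2 * k * P + k ^ 2 * X * Y with hDdef
  set a := 1 - 2 * k * P - k * Y with ha
  set b := 1 + k * X with hb
  have hnorm : ‖mobiusAdd k x y‖ ^ 2 =
      (1 / D) ^ 2 * (a ^ 2 * X + 2 * (a * b) * P + b ^ 2 * Y) := by
    rw [mobiusAdd, norm_smul, mul_pow, norm_combo_sq]
    rw [← hX, ← hY, ← hP, ← hDdef, ← ha, ← hb]
    rw [Real.norm_eq_abs, abs_of_pos (one_div_pos.mpr hD)]
  have hid : D ^ 2 + k * (a ^ 2 * X + 2 * (a * b) * P + b ^ 2 * Y) =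
      (1 + k * X) * (1 + k * Y) * D := by
    rw [hDdef, ha, hb]; ring
  have hprod : 0 < (1 + k * X) * (1 + k * Y) * D :=
    mul_pos (mul_pos (by linarith) (by linarith)) hD
  have hkS : -(D ^ 2) < k * (a ^ 2 * X + 2 * (a * b) * P + b ^ 2 * Y) := by nlinarith
  rw [hnorm]
  have hD2 : (0:ℝ) < D ^ 2 := pow_pos hD 2
  rw [div_pow, one_pow, div_mul_eq_mul_div, one_mul, div_lt_iff₀ hD2]
  have heq : -(1 / k) * D ^ 2 = -(D ^ 2) / k := by ring
  rw [heq, lt_div_iff_of_neg hk]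
  linarith [hkS]
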